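/- An infinite commutative noetherian ring is n-rigid for every positive integer n. -/

import Mathlib

/-- A commutative ring `R` is `n`-rigid if every `R`-module homomorphism
`Rⁿ → Rⁿ⁻¹` has infinite kernel. -/
def IsRigid (R : Type*) [CommRing R] (n : ℕ) : Prop :=
  ∀ f : (Fin n → R) →ₗ[R] (Fin (n - 1) → R),
    (LinearMap.ker f : Set (Fin n → R)).Infinite

/-- The annihilator of an element, as the kernel of `toSpanSingleton`. -/
abbrev annE (R : Type*) [CommRing R] (c : R) : Ideal R :=
  LinearMap.ker (LinearMap.toSpanSingleton R R c)

lemma mem_annE {R : Type*} [CommRing R] {c r : R} : r ∈ annE R c ↔ r * c = 0 := by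
  simp [annE, LinearMap.mem_ker, LinearMap.toSpanSingleton_apply, smul_eq_mul]

/-- A module with a finite submodule with finite quotient is finite. -/
lemma finite_of_finite_quot {R M : Type*} [Ring R] [AddCommGroup M] [Module R M]
    (K : Submodule R M) (h1 : Finite K) (h2 : Finite (M ⧸ K)) : Finite M := by
  classical
  have hs : Function.Surjective K.mkQ := Submodule.mkQ_surjective K
  set g := Function.surjInv hs with hg
  have key : ∀ m : M, m - g (K.mkQ m) ∈ K := by
    intro m
    have h : K.mkQ (m - g (K.mkQ m)) = 0 := by
      rw [map_sub, Function.surjInv_eq hs, sub_self]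
    rwa [Submodule.mkQ_apply, Submodule.Quotient.mk_eq_zero] at h
  apply Finite.of_injective
    (fun m : M => ((K.mkQ m, ⟨m - g (K.mkQ m), key m⟩) : (M ⧸ K) × K))
  intro m₁ m₂ h
  have h1' : K.mkQ m₁ = K.mkQ m₂ := congrArg Prod.fst h
  have h2' : m₁ - g (K.mkQ m₁) = m₂ - g (K.mkQ m₂) :=
    congrArg (fun z => (Prod.snd z : K).1) h
  rw [h1'] at h2'
  exact sub_left_inj.mp h2'

/-- In an infinite noetherian commutative ring there is an element whose
annihilator is a prime ideal with infinite quotient. -/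
lemma exists_good_prime (R : Type*) [CommRing R] [Infinite R] [IsNoetherianRing R] :
    ∃ a : R, (annE R a).IsPrime ∧ Infinite (R ⧸ annE R a) := by
  classical
  set 𝒮 : Set (Ideal R) := {I | (∃ c, I = annE R c) ∧ Infinite (R ⧸ I)} with h𝒮
  have h1 : annE R 1 = ⊥ := by
    ext r; simp [mem_annE]
  have hne : 𝒮.Nonempty := by
    refine ⟨annE R 1, ⟨1, rfl⟩, ?_⟩
    rw [h1]
    exact Infinite.of_injective ((⊥ : Ideal R).quotEquivOfEqBot rfl).symm
      (LinearEquiv.injective _)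
  obtain ⟨p, hp𝒮, hmax⟩ := set_has_maximal_iff_noetherian.mpr ‹IsNoetherianRing R› 𝒮 hne
  obtain ⟨⟨a, rfl⟩, hinf⟩ := hp𝒮
  refine ⟨a, ⟨?_, ?_⟩, hinf⟩
  · -- the annihilator is not the whole ring
    intro htop
    exact not_subsingleton _ (Submodule.Quotient.subsingleton_iff.mpr htop)
  · -- primality
    intro r s hrs
    rw [or_iff_not_imp_left]
    intro hr
    have hpJ : annE R a ≤ annE R (r * a) := by
      intro t ht
      rw [mem_annE] at ht ⊢
      calc t * (r * a) = r * (t * a) := by ring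
        _ = 0 := by rw [ht, mul_zero]
    have hsJ : s ∈ annE R (r * a) := by
      rw [mem_annE] at hrs ⊢
      calc s * (r * a) = r * s * a := by ring
        _ = 0 := hrs
    suffices hJinf : Infinite (R ⧸ annE R (r * a)) by
      have hle : ¬ annE R a < annE R (r * a) := hmax _ ⟨⟨r * a, rfl⟩, hJinf⟩
      have heq : annE R a = annE R (r * a) := hpJ.lt_or_eq.resolve_left hle
      rw [heq]; exact hsJ
    by_contra hJfin
    rw [not_infinite_iff_finite] at hJfin
    -- the map `x ↦ x * r` into the quotient, whose kernel is `annE R (r * a)`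
    set ν : R →ₗ[R] R ⧸ annE R a :=
      (annE R a).mkQ ∘ₗ LinearMap.toSpanSingleton R R r with hνdef
    have hν : ∀ x : R, ν x = Submodule.Quotient.mk (x * r) := fun x => rfl
    have hkerν : LinearMap.ker ν = annE R (r * a) := by
      ext x
      rw [LinearMap.mem_ker, hν, Submodule.Quotient.mk_eq_zero, mem_annE, mem_annE]
      constructor
      · intro h
        calc x * (r * a) = x * r * a := by ring
          _ = 0 := h
      · intro h
        calc x * r * a = x * (r * a) := by ring
          _ = 0 := h
    have hfinν : Finite (LinearMap.range ν) := by
      have e := ν.quotKerEquivRange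
      rw [hkerν] at e
      exact Finite.of_equiv _ e.toEquiv
    -- multiplication by `r` on the quotient
    have hcm : annE R a ≤ Submodule.comap (LinearMap.lsmul R R r) (annE R a) := by
      intro t ht
      rw [Submodule.mem_comap]
      rw [mem_annE] at ht
      show r • t ∈ annE R a
      rw [smul_eq_mul, mem_annE]
      calc r * t * a = r * (t * a) := by ring
        _ = 0 := by rw [ht, mul_zero]
    set μ : (R ⧸ annE R a) →ₗ[R] (R ⧸ annE R a) :=
      Submodule.mapQ (annE R a) (annE R a) (LinearMap.lsmul R R r) hcm with hμdef
    have hμ : ∀ x : R, μ (Submodule.Quotient.mk x) = Submodule.Quotient.mk (r * x) :=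
      fun x => by rw [hμdef, Submodule.mapQ_apply]; rfl
    have hrangeμ : (LinearMap.range μ : Set (R ⧸ annE R a))
        ⊆ (LinearMap.range ν : Set (R ⧸ annE R a)) := by
      rintro y ⟨z, rfl⟩
      obtain ⟨x, rfl⟩ := Submodule.Quotient.mk_surjective _ z
      exact ⟨x, by rw [hν, hμ, mul_comm]⟩
    have hfinμ : Finite (LinearMap.range μ) := by
      have hsetν : (LinearMap.range ν : Set (R ⧸ annE R a)).Finite := Set.toFinite _
      exact Set.finite_coe_iff.mpr (hsetν.subset hrangeμ)
    -- the kernel of multiplication by `r` is infinite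
    have hT : Infinite (LinearMap.ker μ) := by
      by_contra hTf
      rw [not_infinite_iff_finite] at hTf
      have hq : Finite ((R ⧸ annE R a) ⧸ LinearMap.ker μ) :=
        Finite.of_equiv _ μ.quotKerEquivRange.symm.toEquiv
      have : Finite (R ⧸ annE R a) := finite_of_finite_quot _ hTf hq
      exact not_infinite_iff_finite.mpr this hinf
    -- but the kernel is finitely generated, with each cyclic piece finite
    obtain ⟨G, hG⟩ := IsNoetherian.noetherian (LinearMap.ker μ)
    have hcyc : ∀ g : R ⧸ annE R a, g ∈ LinearMap.ker μ →
        (Set.range fun x : R => x • g).Finite := by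
      intro g hg
      obtain ⟨t, rfl⟩ := Submodule.Quotient.mk_surjective _ g
      by_cases h0 : (Submodule.Quotient.mk t : R ⧸ annE R a) = 0
      · rw [h0]
        simp only [smul_zero]
        rw [Set.range_const]
        exact Set.finite_singleton _
      · have ht : (r * t) * a = 0 := by
          rw [LinearMap.mem_ker, hμ, Submodule.Quotient.mk_eq_zero, mem_annE] at hg
          exact hg
        have hrta : r ∈ annE R (t * a) := by
          rw [mem_annE]
          calc r * (t * a) = r * t * a := by ring
            _ = 0 := ht
        have hlt : annE R a < annE R (t * a) := by
          refine lt_of_le_of_ne ?_ fun heq => hr ?_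
          · intro u hu
            rw [mem_annE] at hu ⊢
            calc u * (t * a) = t * (u * a) := by ring
              _ = 0 := by rw [hu, mul_zero]
          · rw [heq]; exact hrta
        have hfin2 : ¬ Infinite (R ⧸ annE R (t * a)) := fun h =>
          hmax _ ⟨⟨t * a, rfl⟩, h⟩ hlt
        rw [not_infinite_iff_finite] at hfin2
        set L : R →ₗ[R] R ⧸ annE R a :=
          LinearMap.toSpanSingleton R (R ⧸ annE R a) (Submodule.Quotient.mk t) with hLdef
        have hkerL : LinearMap.ker L = annE R (t * a) := by
          ext x
          rw [LinearMap.mem_ker, hLdef, LinearMap.toSpanSingleton_apply,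
            ← Submodule.Quotient.mk_smul, Submodule.Quotient.mk_eq_zero, mem_annE, mem_annE,
            smul_eq_mul, mul_assoc]
        have hfinL : Finite (LinearMap.range L) := by
          have e := L.quotKerEquivRange
          rw [hkerL] at e
          exact Finite.of_equiv _ e.toEquiv
        have hsetL : (LinearMap.range L : Set (R ⧸ annE R a)).Finite := Set.toFinite _
        rw [LinearMap.coe_range] at hsetL
        exact hsetL
    -- assemble: the kernel is contained in a finite sum of finite cyclic sets
    set A : {x // x ∈ G} → Set (R ⧸ annE R a) :=
      fun g => Set.range fun x : R => x • (g : R ⧸ annE R a) with hA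
    haveI hAfin : ∀ g, Finite (A g) := fun g =>
      (hcyc g (by rw [← hG]; exact Submodule.subset_span (Finset.mem_coe.mpr g.2))).to_subtype
    have hTfin : ((LinearMap.ker μ : Submodule R (R ⧸ annE R a)) :
        Set (R ⧸ annE R a)).Finite := by
      have hB : (Set.range fun y : (∀ g : {x // x ∈ G}, A g) =>
          ∑ g, (y g : R ⧸ annE R a)).Finite := Set.finite_range _
      refine hB.subset ?_
      intro z hz
      rw [SetLike.mem_coe, ← hG] at hz
      obtain ⟨c, -, hc⟩ := Submodule.mem_span_finset.mp hz
      refine ⟨fun g => ⟨c g • (g : R ⧸ annE R a), ⟨c g, rfl⟩⟩, ?_⟩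
      rw [← hc]
      exact Finset.sum_coe_sort G (fun i => c i • i)
    exact not_infinite_iff_finite.mpr (Set.finite_coe_iff.mpr hTfin) hT

/-- An infinite commutative noetherian ring is `n`-rigid for
every positive integer `n`. -/
theorem infinite_comm_noetherian_isRigid (R : Type*) [CommRing R] [Infinite R]
    [IsNoetherianRing R] : ∀ n : ℕ, 1 ≤ n → IsRigid R n := by
  classical
  intro n hn f
  obtain ⟨a, hp, hinf⟩ := exists_good_prime R
  set p : Ideal R := annE R a with hpdef
  -- the quotient ring
  haveI : Nontrivial (R ⧸ p) := by
    have : Infinite (R ⧸ p) := hinf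
    infer_instance
  -- the matrix of f and its reduction mod p
  set M : Matrix (Fin (n - 1)) (Fin n) R := LinearMap.toMatrix' f with hM
  set Mq : Matrix (Fin (n - 1)) (Fin n) (R ⧸ p) := M.map (Ideal.Quotient.mk p) with hMq
  set g : (Fin n → R ⧸ p) →ₗ[R ⧸ p] (Fin (n - 1) → R ⧸ p) := Matrix.toLin' Mq with hg
  have hginj : ¬ Function.Injective g := by
    intro h
    have := le_of_fin_injective (R ⧸ p) g h
    omega
  have hker : LinearMap.ker g ≠ ⊥ := fun h => hginj (LinearMap.ker_eq_bot.mp h)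
  obtain ⟨y, hy, hy0⟩ := (Submodule.ne_bot_iff _).mp hker
  -- lift y to R
  have hlift : ∀ j, ∃ x : R, Ideal.Quotient.mk p x = y j :=
    fun j => Ideal.Quotient.mk_surjective (y j)
  choose x hx using hlift
  obtain ⟨j₀, hj₀⟩ : ∃ j, y j ≠ 0 := by
    by_contra h
    push_neg at h
    exact hy0 (funext h)
  have hxj₀ : x j₀ ∉ p := by
    intro hmem
    exact hj₀ (by rw [← hx j₀, Ideal.Quotient.eq_zero_iff_mem]; exact hmem)
  -- f x lands in p componentwise
  have hfx : ∀ i, f x i ∈ p := by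
    intro i
    have hfxM : f x = M.mulVec x := by
      rw [hM, ← Matrix.toLin'_apply, Matrix.toLin'_toMatrix']
    have hgy : g y i = 0 := by rw [LinearMap.mem_ker.mp hy]; rfl
    rw [hg, Matrix.toLin'_apply] at hgy
    have : Ideal.Quotient.mk p (f x i) = 0 := by
      rw [hfxM, ← hgy]
      simp only [Matrix.mulVec, dotProduct, hMq, Matrix.map_apply, map_sum, map_mul, hx]
    rwa [Ideal.Quotient.eq_zero_iff_mem] at this
  have hax : f (a • x) = 0 := by
    rw [map_smul]
    funext i
    have := (mem_annE).mp (hfx i)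
    rw [Pi.smul_apply, smul_eq_mul, mul_comm, this, Pi.zero_apply]
  -- the line through a • x
  set G : R →ₗ[R] (Fin n → R) := LinearMap.toSpanSingleton R (Fin n → R) (a • x) with hGdef
  have hkerG : LinearMap.ker G = p := by
    ext r
    rw [LinearMap.mem_ker, hGdef, LinearMap.toSpanSingleton_apply]
    constructor
    · intro h
      have hj : r * (x j₀ * a) = 0 := by
        have := congrFun h j₀
        rw [Pi.smul_apply, Pi.smul_apply, smul_eq_mul, smul_eq_mul] at this
        calc r * (x j₀ * a) = r * (a * x j₀) := by ring
          _ = 0 := this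
      have hmem : r * x j₀ ∈ p := by
        rw [hpdef, mem_annE]
        calc r * x j₀ * a = r * (x j₀ * a) := by ring
          _ = 0 := hj
      rcases hp.mem_or_mem hmem with h1 | h1
      · exact h1
      · exact absurd h1 hxj₀
    · intro hr
      funext j
      rw [hpdef, mem_annE] at hr
      rw [Pi.smul_apply, Pi.smul_apply, smul_eq_mul, smul_eq_mul, Pi.zero_apply]
      calc r * (a * x j) = r * a * x j := by ring
        _ = 0 := by rw [hr, zero_mul]
  have hrange : (LinearMap.range G : Set (Fin n → R)) ⊆ (LinearMap.ker f : Set (Fin n → R)) := by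
    rintro v ⟨r, rfl⟩
    rw [SetLike.mem_coe, LinearMap.mem_ker, hGdef, LinearMap.toSpanSingleton_apply,
      map_smul, hax, smul_zero]
  have hinfG : Infinite (LinearMap.range G) := by
    have e := G.quotKerEquivRange
    rw [hkerG] at e
    exact Infinite.of_injective e e.injective
  have hinfset : (LinearMap.range G : Set (Fin n → R)).Infinite :=
    Set.infinite_coe_iff.mp hinfG
  exact hinfset.mono hrange
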